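/- For c > 0 define the noise perturbation Hamiltonian H_depol = c · Σ_{i=1}^{N} ( 1 - (1/3) Σ_{α∈{x,y,z}} τ_{i,1}^α τ_{i,2}^α ) on ((ℂ²)^{⊗4})^{⊗N}. Then H_depol (|id⟩⟩^{⊗N}) = 0, while ⟨swap|^{⊗N} H_depol |swap⟩⟩^{⊗N} = c·N; in particular, with c = (3/(4δt))·log(1/(1-4λ/3)) for 0 ≤ λ < 3/4, the expectation value on |swap⟩⟩^{⊗N} equals (3N/(4δt))·log(1/(1-4λ/3)). Thus the noise lifts the degeneracy between the two replica-symmetry-broken states, favoring |id⟩⟩^{⊗N}. -/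
import Mathlib


/-! STATEMENT 13: the noise perturbation H_depol annihilates |id⟩⟩^{⊗N} and has expectation c·N on |swap⟩⟩^{⊗N}; with c = (3/(4δt))·log(1/(1-4λ/3)) this equals (3N/(4δt))·log(1/(1-4λ/3)). -/

open Matrix Finset

noncomputable section

/-- The Pauli matrices σ^x, σ^y, σ^z. -/
def pauli : Fin 3 → Matrix (Fin 2) (Fin 2) ℂ
  | 0 => !![0, 1; 1, 0]
  | 1 => !![0, -Complex.I; Complex.I, 0]
  | 2 => !![1, 0; 0, -1]

/-- The single-contour matrix: the Pauli matrix `σ^α` on forward contours `a = 1, 3`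
(indices `0, 2`), and its entrywise complex conjugate `(σ^α)^*` on backward contours
`a = 2, 4` (indices `1, 3`). -/
def pauliC (a : Fin 4) (α : Fin 3) : Matrix (Fin 2) (Fin 2) ℂ :=
  if a = 0 ∨ a = 2 then pauli α else (pauli α).map (starRingEnd ℂ)

/-- Basis of the replica Hilbert space ((ℂ²)^{⊗4})^{⊗N}: a site index `i : Fin N` and a
contour index `a : Fin 4` give a qubit. -/
abbrev RepIdx (N : ℕ) := Fin N → Fin 4 → Fin 2

/-- `τ_{i,a}^α`: acts as `pauliC a α` on contour `a` of site `i`, identity elsewhere. -/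
def tau (N : ℕ) (i : Fin N) (a : Fin 4) (α : Fin 3) :
    Matrix (RepIdx N) (RepIdx N) ℂ :=
  Matrix.of fun f g =>
    pauliC a α (f i a) (g i a) *
      ∏ p ∈ (univ : Finset (Fin N × Fin 4)).erase (i, a),
        if f p.1 p.2 = g p.1 p.2 then (1 : ℂ) else 0

/-- The effective Hamiltonian
`H_eff = (J/2) Σ_{i=1}^{N-1} Σ_{a,b} (-1)^{a+b} (Σ_α τ_{i,a}^α τ_{i,b}^α)(Σ_β τ_{i+1,a}^β τ_{i+1,b}^β)`
on the open chain of `N` sites. -/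
def Heff (N : ℕ) (J : ℝ) : Matrix (RepIdx N) (RepIdx N) ℂ :=
  ((J : ℂ) / 2) • ∑ i : Fin N,
    if h : (i : ℕ) + 1 < N then
      ∑ a : Fin 4, ∑ b : Fin 4, ((-1 : ℂ) ^ ((a : ℕ) + (b : ℕ))) •
        ((∑ α : Fin 3, tau N i a α * tau N i b α) *
         (∑ β : Fin 3, tau N ⟨(i : ℕ) + 1, h⟩ a β * tau N ⟨(i : ℕ) + 1, h⟩ b β))
    else 0

/-- The single-site state |id⟩⟩ = ½(|0000⟩+|0011⟩+|1100⟩+|1111⟩). -/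
def idS : (Fin 4 → Fin 2) → ℂ := fun f => if f 0 = f 1 ∧ f 2 = f 3 then 1 / 2 else 0

/-- The single-site state |swap⟩⟩ = ½(|0000⟩+|1001⟩+|0110⟩+|1111⟩). -/
def swapS : (Fin 4 → Fin 2) → ℂ := fun f => if f 0 = f 3 ∧ f 1 = f 2 then 1 / 2 else 0

/-- The product state |id⟩⟩^{⊗N}. -/
def idN (N : ℕ) : RepIdx N → ℂ := fun f => ∏ i : Fin N, idS (f i)

/-- The product state |swap⟩⟩^{⊗N}. -/
def swapN (N : ℕ) : RepIdx N → ℂ := fun f => ∏ i : Fin N, swapS (f i)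

/-- The noise perturbation Hamiltonian
`H_depol = c Σ_{i=1}^N (1 - (1/3) Σ_α τ_{i,1}^α τ_{i,2}^α)` on `((ℂ²)^{⊗4})^{⊗N}`. -/
def Hdepol (N : ℕ) (c : ℝ) : Matrix (RepIdx N) (RepIdx N) ℂ :=
  (c : ℂ) • ∑ i : Fin N,
    ((1 : Matrix (RepIdx N) (RepIdx N) ℂ) -
      (1 / 3 : ℂ) • ∑ α : Fin 3, tau N i 0 α * tau N i 1 α)

/-! ### Auxiliary machinery -/

namespace Stmt13Aux

/-- Update one qubit of a replica configuration. -/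
def upd {N : ℕ} (f : RepIdx N) (i : Fin N) (a : Fin 4) (x : Fin 2) : RepIdx N :=
  Function.update f i (Function.update (f i) a x)

lemma upd_self {N : ℕ} (f : RepIdx N) (i : Fin N) (a : Fin 4) (x : Fin 2) :
    upd f i a x i a = x := by simp [upd]

lemma upd_ne {N : ℕ} (f : RepIdx N) (i : Fin N) (a : Fin 4) (x : Fin 2)
    {p : Fin N × Fin 4} (hp : p ≠ (i, a)) : upd f i a x p.1 p.2 = f p.1 p.2 := by
  rcases eq_or_ne p.1 i with h1 | h1
  · have h2 : p.2 ≠ a := fun h2 => hp (Prod.ext h1 h2)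
    simp [upd, h1, Function.update_of_ne h2]
  · simp [upd, Function.update_of_ne h1]

lemma tau_mulVec {N : ℕ} (i : Fin N) (a : Fin 4) (α : Fin 3) (v : RepIdx N → ℂ)
    (f : RepIdx N) :
    ((tau N i a α) *ᵥ v) f = ∑ x : Fin 2, pauliC a α (f i a) x * v (upd f i a x) := by
  classical
  have hinj : Function.Injective (fun x : Fin 2 => upd f i a x) := by
    intro x y hxy
    have := congrArg (fun g : RepIdx N => g i a) hxy
    simpa [upd_self] using this
  have hsub : ∀ g : RepIdx N,
      g ∉ Finset.image (fun x : Fin 2 => upd f i a x) univ →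
      tau N i a α f g * v g = 0 := by
    intro g hg
    have hne : g ≠ upd f i a (g i a) := by
      intro h
      exact hg (Finset.mem_image.2 ⟨g i a, Finset.mem_univ _, h.symm⟩)
    obtain ⟨p, hp⟩ : ∃ p : Fin N × Fin 4, g p.1 p.2 ≠ upd f i a (g i a) p.1 p.2 := by
      by_contra hall
      push_neg at hall
      exact hne (funext fun j => funext fun b => hall (j, b))
    have hpne : p ≠ (i, a) := by
      intro h; subst h
      exact hp (upd_self f i a (g i a)).symm
    have hfg : ¬ (f p.1 p.2 = g p.1 p.2) := by
      intro h
      apply hp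
      rw [upd_ne f i a _ hpne]
      exact h.symm
    have hprod : (∏ p' ∈ (univ : Finset (Fin N × Fin 4)).erase (i, a),
        if f p'.1 p'.2 = g p'.1 p'.2 then (1 : ℂ) else 0) = 0 :=
      Finset.prod_eq_zero (Finset.mem_erase.2 ⟨hpne, Finset.mem_univ _⟩)
        (by simp [hfg])
    simp [tau, hprod]
  have step1 : ((tau N i a α) *ᵥ v) f = ∑ g, tau N i a α f g * v g := rfl
  rw [step1, ← Finset.sum_subset (Finset.subset_univ
      (Finset.image (fun x : Fin 2 => upd f i a x) univ)) (fun g _ hg => hsub g hg),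
    Finset.sum_image (fun x _ y _ h => hinj h)]
  refine Finset.sum_congr rfl fun x _ => ?_
  have h1 : tau N i a α f (upd f i a x) = pauliC a α (f i a) x := by
    have hprod : (∏ p' ∈ (univ : Finset (Fin N × Fin 4)).erase (i, a),
        if f p'.1 p'.2 = upd f i a x p'.1 p'.2 then (1 : ℂ) else 0) = 1 := by
      refine Finset.prod_eq_one fun p hp => ?_
      rw [upd_ne f i a x (Finset.mem_erase.1 hp).1]
      simp
    simp [tau, hprod, upd_self]
  rw [h1]

lemma upd_upd {N : ℕ} (f : RepIdx N) (i : Fin N) (x y : Fin 2) :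
    upd (upd f i 0 x) i 1 y =
      Function.update f i (Function.update (Function.update (f i) 0 x) 1 y) := by
  simp [upd, Function.update_idem]

lemma upd_at {N : ℕ} (f : RepIdx N) (i : Fin N) (x : Fin 2) :
    upd f i 0 x i 1 = f i 1 := by
  simp [upd, Function.update_apply]

lemma tau2_mulVec {N : ℕ} (i : Fin N) (α : Fin 3) (v : RepIdx N → ℂ) (f : RepIdx N) :
    ((tau N i 0 α * tau N i 1 α) *ᵥ v) f =
      ∑ x : Fin 2, ∑ y : Fin 2, pauliC 0 α (f i 0) x * pauliC 1 α (f i 1) y *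
        v (Function.update f i (Function.update (Function.update (f i) 0 x) 1 y)) := by
  rw [← Matrix.mulVec_mulVec, tau_mulVec]
  refine Finset.sum_congr rfl fun x _ => ?_
  rw [tau_mulVec, Finset.mul_sum]
  refine Finset.sum_congr rfl fun y _ => ?_
  rw [upd_at, upd_upd]
  ring

lemma mulVec_tau2_prod {N : ℕ} (i : Fin N) (α : Fin 3) (w : (Fin 4 → Fin 2) → ℂ)
    (f : RepIdx N) :
    ((tau N i 0 α * tau N i 1 α) *ᵥ (fun g : RepIdx N => ∏ j, w (g j))) f =
      (∏ j ∈ univ.erase i, w (f j)) *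
        ∑ x : Fin 2, ∑ y : Fin 2, pauliC 0 α (f i 0) x * pauliC 1 α (f i 1) y *
          w (Function.update (Function.update (f i) 0 x) 1 y) := by
  rw [tau2_mulVec, Finset.mul_sum]
  refine Finset.sum_congr rfl fun x _ => ?_
  rw [Finset.mul_sum]
  refine Finset.sum_congr rfl fun y _ => ?_
  have hprod : (∏ j, w (Function.update f i
      (Function.update (Function.update (f i) 0 x) 1 y) j)) =
      w (Function.update (Function.update (f i) 0 x) 1 y) * ∏ j ∈ univ.erase i, w (f j) := by
    rw [← Finset.mul_prod_erase univ _ (Finset.mem_univ i)]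
    congr 1
    · simp
    · refine Finset.prod_congr rfl fun j hj => ?_
      rw [Function.update_of_ne (Finset.mem_erase.1 hj).1]
  rw [hprod]; ring

lemma fin2_cases (t : Fin 2) : t = 0 ∨ t = 1 := by omega

/-- Sum of matrices applied to a vector. -/
lemma sum_mulVec' {n : Type*} [Fintype n] [DecidableEq n] {ι : Type*} (s : Finset ι)
    (M : ι → Matrix n n ℂ) (v : n → ℂ) :
    (∑ α ∈ s, M α) *ᵥ v = ∑ α ∈ s, (M α) *ᵥ v := by
  ext f
  simp only [Matrix.mulVec, dotProduct, Finset.sum_apply, Matrix.sum_apply,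
    Finset.sum_mul]
  exact Finset.sum_comm

/-! ### Single-site computations -/

lemma idS_upd (u : Fin 4 → Fin 2) (x y : Fin 2) :
    idS (Function.update (Function.update u 0 x) 1 y) =
      if x = y ∧ u 2 = u 3 then 1 / 2 else 0 := by
  simp [idS, Function.update_apply]

lemma swapS_upd (u : Fin 4 → Fin 2) (x y : Fin 2) :
    swapS (Function.update (Function.update u 0 x) 1 y) =
      if x = u 3 ∧ y = u 2 then 1 / 2 else 0 := by
  simp [swapS, Function.update_apply]

lemma pauliC0 (α : Fin 3) : pauliC 0 α = pauli α := by simp [pauliC]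

lemma pauliC1 (α : Fin 3) : pauliC 1 α = (pauli α).map (starRingEnd ℂ) := by
  simp [pauliC]

lemma site_id (u : Fin 4 → Fin 2) :
    ∑ α : Fin 3, ∑ x : Fin 2, ∑ y : Fin 2, pauliC 0 α (u 0) x * pauliC 1 α (u 1) y *
      idS (Function.update (Function.update u 0 x) 1 y) = 3 * idS u := by
  simp only [idS_upd, pauliC0, pauliC1]
  by_cases h23 : u 2 = u 3
  · have hid : idS u = if u 0 = u 1 then 1 / 2 else 0 := by simp [idS, h23]
    rw [hid]
    simp only [h23, and_true]
    rcases fin2_cases (u 0) with h0 | h0 <;> rcases fin2_cases (u 1) with h1 | h1 <;>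
      rw [h0, h1] <;>
      simp [pauli, Fin.sum_univ_three, Fin.sum_univ_two, Matrix.map_apply,
        Complex.ext_iff] <;> norm_num
  · have hid : idS u = 0 := by simp [idS, h23]
    rw [hid]
    simp [h23]


def e4 : Fin 2 × Fin 2 × Fin 2 × Fin 2 ≃ (Fin 4 → Fin 2) where
  toFun p := ![p.1, p.2.1, p.2.2.1, p.2.2.2]
  invFun u := (u 0, u 1, u 2, u 3)
  left_inv := by decide
  right_inv := by decide

lemma sum_fun4 (F : (Fin 4 → Fin 2) → ℂ) :
    ∑ u : Fin 4 → Fin 2, F u =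
      ∑ a : Fin 2, ∑ b : Fin 2, ∑ c : Fin 2, ∑ d : Fin 2, F ![a, b, c, d] := by
  rw [← Equiv.sum_comp e4 F]
  simp only [Fintype.sum_prod_type]
  rfl

lemma swap_norm : ∑ u : Fin 4 → Fin 2, (starRingEnd ℂ) (swapS u) * swapS u = 1 := by
  rw [sum_fun4]
  simp [swapS, Fin.sum_univ_two, Matrix.cons_val_zero, Matrix.cons_val_one,
    Matrix.head_cons, Matrix.cons_val_two, Matrix.cons_val_three]
  norm_num [map_ofNat]

lemma site_swap :
    ∑ α : Fin 3, ∑ u : Fin 4 → Fin 2, (starRingEnd ℂ) (swapS u) *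
      (∑ x : Fin 2, ∑ y : Fin 2, pauli α (u 0) x *
        ((pauli α).map (starRingEnd ℂ)) (u 1) y *
        (if x = u 3 ∧ y = u 2 then 1 / 2 else 0)) = 0 := by
  simp only [sum_fun4]
  simp [swapS, pauli, Fin.sum_univ_three, Fin.sum_univ_two, Matrix.map_apply,
    Matrix.cons_val_zero, Matrix.cons_val_one, Matrix.head_cons, Matrix.cons_val_two,
    Matrix.cons_val_three, Complex.ext_iff]

lemma dot_sum {n ι : Type*} [Fintype n] (s : Finset ι) (v : n → ℂ) (w : ι → n → ℂ) :
    v ⬝ᵥ (∑ α ∈ s, w α) = ∑ α ∈ s, v ⬝ᵥ w α := by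
  simp only [dotProduct, Finset.sum_apply, Finset.mul_sum]
  exact Finset.sum_comm

lemma sum_prod_pi {N : ℕ} (G : Fin N → (Fin 4 → Fin 2) → ℂ) :
    (∑ f : RepIdx N, ∏ j : Fin N, G j (f j)) = ∏ j : Fin N, ∑ b : Fin 4 → Fin 2, G j b := by
  rw [← Finset.sum_prod_piFinset univ G, Fintype.piFinset_univ]

lemma idN_eq (N : ℕ) : idN N = fun g : RepIdx N => ∏ j, idS (g j) := rfl
lemma swapN_eq (N : ℕ) : swapN N = fun g : RepIdx N => ∏ j, swapS (g j) := rfl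

lemma sum_tau2_idN {N : ℕ} (i : Fin N) :
    (∑ α : Fin 3, tau N i 0 α * tau N i 1 α) *ᵥ idN N = (3 : ℂ) • idN N := by
  rw [sum_mulVec']
  funext f
  rw [Finset.sum_apply]
  have hstep : ∀ α : Fin 3, ((tau N i 0 α * tau N i 1 α) *ᵥ idN N) f
      = (∏ j ∈ univ.erase i, idS (f j)) *
        ∑ x : Fin 2, ∑ y : Fin 2, pauliC 0 α (f i 0) x * pauliC 1 α (f i 1) y *
          idS (Function.update (Function.update (f i) 0 x) 1 y) := fun α => by
    rw [idN_eq]; exact mulVec_tau2_prod i α idS f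
  rw [Finset.sum_congr rfl fun α _ => hstep α, ← Finset.mul_sum, site_id (f i),
    Pi.smul_apply, smul_eq_mul, idN_eq]
  show (∏ j ∈ univ.erase i, idS (f j)) * (3 * idS (f i)) = 3 * ∏ j : Fin N, idS (f j)
  rw [← Finset.mul_prod_erase univ (fun j => idS (f j)) (Finset.mem_univ i)]
  ring

lemma site_idN_zero {N : ℕ} (i : Fin N) :
    ((1 : Matrix (RepIdx N) (RepIdx N) ℂ) -
      (1 / 3 : ℂ) • ∑ α : Fin 3, tau N i 0 α * tau N i 1 α) *ᵥ idN N = 0 := by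
  rw [Matrix.sub_mulVec, Matrix.one_mulVec, Matrix.smul_mulVec, sum_tau2_idN,
    smul_smul, show (1 / 3 : ℂ) * 3 = 1 by norm_num, one_smul, sub_self]

lemma swapN_norm (N : ℕ) : star (swapN N) ⬝ᵥ swapN N = 1 := by
  have h1 : ∀ f : RepIdx N, star (swapN N) f * swapN N f
      = ∏ j : Fin N, ((starRingEnd ℂ) (swapS (f j)) * swapS (f j)) := by
    intro f
    rw [Pi.star_apply, swapN_eq, ← starRingEnd_apply, map_prod, ← Finset.prod_mul_distrib]
  calc star (swapN N) ⬝ᵥ swapN N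
      = ∑ f : RepIdx N, ∏ j : Fin N, ((starRingEnd ℂ) (swapS (f j)) * swapS (f j)) :=
        Finset.sum_congr rfl fun f _ => h1 f
    _ = ∏ _j : Fin N, ∑ b : Fin 4 → Fin 2, (starRingEnd ℂ) (swapS b) * swapS b :=
        sum_prod_pi (fun _ b => (starRingEnd ℂ) (swapS b) * swapS b)
    _ = 1 := by rw [Finset.prod_congr rfl fun j _ => swap_norm, Finset.prod_const_one]

lemma swap_tau2_zero {N : ℕ} (i : Fin N) :
    star (swapN N) ⬝ᵥ ((∑ α : Fin 3, tau N i 0 α * tau N i 1 α) *ᵥ swapN N) = 0 := by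
  rw [sum_mulVec', dot_sum]
  have key : ∀ α : Fin 3, star (swapN N) ⬝ᵥ ((tau N i 0 α * tau N i 1 α) *ᵥ swapN N)
      = ∑ u : Fin 4 → Fin 2, (starRingEnd ℂ) (swapS u) *
          (∑ x : Fin 2, ∑ y : Fin 2, pauliC 0 α (u 0) x * pauliC 1 α (u 1) y *
            swapS (Function.update (Function.update u 0 x) 1 y)) := by
    intro α
    set K : (Fin 4 → Fin 2) → ℂ := fun u =>
      ∑ x : Fin 2, ∑ y : Fin 2, pauliC 0 α (u 0) x * pauliC 1 α (u 1) y *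
        swapS (Function.update (Function.update u 0 x) 1 y) with hK
    have h1 : ∀ f : RepIdx N, star (swapN N) f * ((tau N i 0 α * tau N i 1 α) *ᵥ swapN N) f
        = ∏ j : Fin N, (if j = i then (starRingEnd ℂ) (swapS (f j)) * K (f j)
            else (starRingEnd ℂ) (swapS (f j)) * swapS (f j)) := by
      intro f
      have h2 : ((tau N i 0 α * tau N i 1 α) *ᵥ swapN N) f
          = (∏ j ∈ univ.erase i, swapS (f j)) * K (f i) := by
        rw [swapN_eq]; exact mulVec_tau2_prod i α swapS f
      have h3 : star (swapN N) f = ∏ j : Fin N, (starRingEnd ℂ) (swapS (f j)) := by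
        rw [Pi.star_apply, swapN_eq, ← starRingEnd_apply, map_prod]
      rw [h2, h3,
        ← Finset.mul_prod_erase univ (fun j => if j = i then (starRingEnd ℂ) (swapS (f j)) * K (f j)
            else (starRingEnd ℂ) (swapS (f j)) * swapS (f j)) (Finset.mem_univ i),
        if_pos rfl,
        Finset.prod_congr rfl (fun j hj =>
          if_neg ((Finset.mem_erase.1 hj).1 : j ≠ i)),
        Finset.prod_mul_distrib,
        ← Finset.mul_prod_erase univ (fun j => (starRingEnd ℂ) (swapS (f j))) (Finset.mem_univ i)]
      ring
    calc star (swapN N) ⬝ᵥ ((tau N i 0 α * tau N i 1 α) *ᵥ swapN N)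
        = ∑ f : RepIdx N, ∏ j : Fin N, (if j = i then (starRingEnd ℂ) (swapS (f j)) * K (f j)
            else (starRingEnd ℂ) (swapS (f j)) * swapS (f j)) :=
          Finset.sum_congr rfl fun f _ => h1 f
      _ = ∏ j : Fin N, ∑ b : Fin 4 → Fin 2, (if j = i then (starRingEnd ℂ) (swapS b) * K b
            else (starRingEnd ℂ) (swapS b) * swapS b) :=
          sum_prod_pi (fun j b => if j = i then (starRingEnd ℂ) (swapS b) * K b
            else (starRingEnd ℂ) (swapS b) * swapS b)
      _ = ∑ b : Fin 4 → Fin 2, (starRingEnd ℂ) (swapS b) * K b := by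
          rw [Finset.prod_eq_single i
            (fun j _ hj => by
              rw [Finset.sum_congr rfl fun b _ => if_neg hj]
              exact swap_norm)
            (fun h => absurd (Finset.mem_univ i) h)]
          simp
  rw [Finset.sum_congr rfl fun α _ => key α]
  have := site_swap
  simp only [pauliC0, pauliC1, swapS_upd]
  exact this

lemma site_swap_exp {N : ℕ} (i : Fin N) :
    star (swapN N) ⬝ᵥ (((1 : Matrix (RepIdx N) (RepIdx N) ℂ) -
      (1 / 3 : ℂ) • ∑ α : Fin 3, tau N i 0 α * tau N i 1 α) *ᵥ swapN N) = 1 := by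
  rw [Matrix.sub_mulVec, Matrix.one_mulVec, Matrix.smul_mulVec, dotProduct_sub,
    dotProduct_smul, swap_tau2_zero, swapN_norm]
  simp

lemma main_calc (N : ℕ) (c : ℝ) :
    (Hdepol N c).mulVec (idN N) = 0 ∧
      star (swapN N) ⬝ᵥ (Hdepol N c).mulVec (swapN N) = (c : ℂ) * N := by
  constructor
  · rw [Hdepol, Matrix.smul_mulVec, sum_mulVec',
      Finset.sum_congr rfl fun i _ => site_idN_zero i]
    simp
  · rw [Hdepol, Matrix.smul_mulVec, dotProduct_smul, sum_mulVec', dot_sum,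
      Finset.sum_congr rfl fun i _ => site_swap_exp i]
    simp [Finset.card_univ, smul_eq_mul]

end Stmt13Aux

theorem stmt13 (N : ℕ) :
    (∀ c : ℝ, 0 < c →
      (Hdepol N c).mulVec (idN N) = 0 ∧
      star (swapN N) ⬝ᵥ (Hdepol N c).mulVec (swapN N) = (c : ℂ) * N) ∧
    (∀ δt lam : ℝ, 0 < δt → 0 ≤ lam → lam < 3 / 4 →
      star (swapN N) ⬝ᵥ
          (Hdepol N (3 / (4 * δt) * Real.log (1 / (1 - 4 * lam / 3)))).mulVec (swapN N) =
        ((3 * N / (4 * δt) * Real.log (1 / (1 - 4 * lam / 3)) : ℝ) : ℂ)) := by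
  refine ⟨fun c _ => Stmt13Aux.main_calc N c, fun δt lam _ _ _ => ?_⟩
  rw [(Stmt13Aux.main_calc N _).2]
  push_cast
  ring

end
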